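/- (Lemma 1(i)) For each player i, the convex hull of C(Γ,i) equals the set of all μ ∈ Δ(A) such that for every a_i in the support of μ_i, the conditional distribution μ_{-i}(·|a_i) lies in the convex hull of C(Γ,i,a_i). -/

import Mathlib

open Finset

section

variable {ι : Type*} [Fintype ι] [DecidableEq ι]

/-- Combine an action `ai` of player `i` with an action profile `a` of the remaining
players into a full action profile. -/
def glue (A : ι → Type*) (i : ι) (ai : A i)
    (a : ∀ j : {j : ι // j ≠ i}, A j.1) (j : ι) : A j :=
  if h : j = i then cast (congrArg A h).symm ai else a ⟨j, h⟩

variable (A : ι → Type*) [∀ j, Fintype (A j)] [∀ j, DecidableEq (A j)]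

/-- Marginal probability `μ_i(a_i)` of a joint distribution `μ` on action profiles. -/
noncomputable def marg (μ : (∀ j, A j) → ℝ) (i : ι) (ai : A i) : ℝ :=
  ∑ a : ∀ j : {j : ι // j ≠ i}, A j.1, μ (glue A i ai a)

/-- Conditional distribution `μ_{-i}(·|a_i)` on opponents' action profiles
(by convention `0` when the marginal vanishes, since division by zero yields `0`). -/
noncomputable def condDist (μ : (∀ j, A j) → ℝ) (i : ι) (ai : A i) :
    (∀ j : {j : ι // j ≠ i}, A j.1) → ℝ :=
  fun a => μ (glue A i ai a) / marg A μ i ai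

variable (x : ∀ i, (∀ j, A j) → ℝ)
variable (V : ∀ i, ((∀ j : {j : ι // j ≠ i}, A j.1) → ℝ) →
  ((∀ j : {j : ι // j ≠ i}, A j.1) → ℝ) → ℝ)

/-- The outcome profile of the lottery faced by player `i` when she plays `ai`:
her payoff as a function of the opponents' action profile. -/
def outcome (i : ι) (ai : A i) : (∀ j : {j : ι // j ≠ i}, A j.1) → ℝ :=
  fun a => x i (glue A i ai a)

/-- `C(Γ, i, a_i)` : distributions `π` on opponents' profiles for which `a_i` is a
CPT best response of player `i`, i.e. `V_i(L_i(π, a_i)) ≥ V_i(L_i(π, ã_i))` for all `ã_i`. -/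
def CEia (i : ι) (ai : A i) : Set ((∀ j : {j : ι // j ≠ i}, A j.1) → ℝ) :=
  {π | π ∈ stdSimplex ℝ (∀ j : {j : ι // j ≠ i}, A j.1) ∧
    ∀ bi : A i, V i π (outcome A x i bi) ≤ V i π (outcome A x i ai)}

/-- `C(Γ, i)` : joint distributions all of whose conditionals given a supported action
`a_i` of player `i` lie in `C(Γ, i, a_i)`. -/
noncomputable def CEi (i : ι) : Set ((∀ j, A j) → ℝ) :=
  {μ | μ ∈ stdSimplex ℝ (∀ j, A j) ∧
    ∀ ai : A i, 0 < marg A μ i ai → condDist A μ i ai ∈ CEia A x V i ai}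

/-- `C(Γ)` : the set of CPT correlated equilibria of the game. -/
noncomputable def CE : Set ((∀ j, A j) → ℝ) :=
  {μ | μ ∈ stdSimplex ℝ (∀ j, A j) ∧
    ∀ i, ∀ ai : A i, 0 < marg A μ i ai → ∀ bi : A i,
      V i (condDist A μ i ai) (outcome A x i bi) ≤ V i (condDist A μ i ai) (outcome A x i ai)}

set_option linter.unusedSectionVars false


theorem my_glue_self (i : ι) (ai : A i) (a : ∀ j : {j : ι // j ≠ i}, A j.1) :
    glue A i ai a i = ai := by simp [glue]

theorem my_glue_restrict (i : ι) (b : ∀ j, A j) :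
    glue A i (b i) (fun j => b j.1) = b := by
  funext j
  unfold glue
  split
  · next h => subst h; rfl
  · rfl

theorem my_restrict_glue (i : ι) (ai : A i) (a : ∀ j : {j : ι // j ≠ i}, A j.1) :
    (fun j : {j : ι // j ≠ i} => glue A i ai a j.1) = a := by
  funext j
  unfold glue
  split
  · next h => exact absurd h j.2
  · rfl

theorem my_sum_glue (i : ι) (f : (∀ j, A j) → ℝ) :
    ∑ b, f b = ∑ ai : A i, ∑ a : ∀ j : {j : ι // j ≠ i}, A j.1, f (glue A i ai a) := by
  have : ∑ ai : A i, ∑ a : ∀ j : {j : ι // j ≠ i}, A j.1, f (glue A i ai a)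
      = ∑ p : A i × (∀ j : {j : ι // j ≠ i}, A j.1), f (glue A i p.1 p.2) :=
    (Fintype.sum_prod_type (f := fun p : A i × (∀ j : {j : ι // j ≠ i}, A j.1) =>
      f (glue A i p.1 p.2))).symm
  rw [this]
  apply Fintype.sum_bijective (fun b => (b i, fun j => b j.1))
  · constructor
    · intro b c h
      have h1 := congrArg Prod.fst h
      have h2 := congrArg Prod.snd h
      simp only at h1 h2
      funext j
      by_cases hj : j = i
      · subst hj; exact h1
      · exact congrFun h2 ⟨j, hj⟩
    · intro p
      refine ⟨glue A i p.1 p.2, ?_⟩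
      ext
      · exact my_glue_self A i p.1 p.2
      · exact congrFun (my_restrict_glue A i p.1 p.2) _
  · intro b
    simp only
    congr 1
    exact (my_glue_restrict A i b).symm

theorem my_marg_nonneg {μ : (∀ j, A j) → ℝ} (hμ : μ ∈ stdSimplex ℝ (∀ j, A j))
    (i : ι) (ai : A i) : 0 ≤ marg A μ i ai :=
  Finset.sum_nonneg fun a _ => hμ.1 _

theorem my_sum_marg {μ : (∀ j, A j) → ℝ} (hμ : μ ∈ stdSimplex ℝ (∀ j, A j)) (i : ι) :
    ∑ ai : A i, marg A μ i ai = 1 := by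
  rw [show ∑ ai : A i, marg A μ i ai = ∑ b, μ b from (my_sum_glue A i μ).symm, hμ.2]

theorem my_glue_eq_zero {μ : (∀ j, A j) → ℝ} (hμ : μ ∈ stdSimplex ℝ (∀ j, A j))
    {i : ι} {ai : A i} (h : marg A μ i ai = 0) (a : ∀ j : {j : ι // j ≠ i}, A j.1) :
    μ (glue A i ai a) = 0 := by
  have := (Finset.sum_eq_zero_iff_of_nonneg (fun a _ => hμ.1 (glue A i ai a))).1 h
  exact this a (Finset.mem_univ a)

theorem my_marg_smul_add (t s : ℝ) (μ ν : (∀ j, A j) → ℝ) (i : ι) (ai : A i) :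
    marg A (t • μ + s • ν) i ai = t * marg A μ i ai + s * marg A ν i ai := by
  simp [marg, Finset.mul_sum, Finset.sum_add_distrib]

/-- the embedding `π ↦ δ_{a_i} ⊗ π` as a linear map -/
noncomputable def embedL (i : ι) (ai : A i) :
    ((∀ j : {j : ι // j ≠ i}, A j.1) → ℝ) →ₗ[ℝ] ((∀ j, A j) → ℝ) where
  toFun π := fun b => if b i = ai then π (fun j => b j.1) else 0
  map_add' π π' := by funext b; by_cases h : b i = ai <;> simp [h]
  map_smul' c π := by funext b; by_cases h : b i = ai <;> simp [h]

theorem my_embedL_marg (i : ι) (ai : A i) (π : (∀ j : {j : ι // j ≠ i}, A j.1) → ℝ)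
    (hπ : ∑ a, π a = 1) (bi : A i) :
    marg A (embedL A i ai π) i bi = if bi = ai then 1 else 0 := by
  unfold marg embedL
  simp only [LinearMap.coe_mk, AddHom.coe_mk, my_glue_self, my_restrict_glue]
  split_ifs with h
  · exact hπ
  · simp

theorem my_embedL_mem_CEi (i : ι) (ai : A i)
    {π : (∀ j : {j : ι // j ≠ i}, A j.1) → ℝ} (hπ : π ∈ CEia A x V i ai) :
    embedL A i ai π ∈ CEi A x V i := by
  have hsum := hπ.1.2
  refine ⟨⟨fun b => ?_, ?_⟩, fun bi hbi => ?_⟩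
  · simp only [embedL, LinearMap.coe_mk, AddHom.coe_mk]
    split_ifs with h
    · exact hπ.1.1 _
    · exact le_refl 0
  · rw [my_sum_glue A i]
    have : ∀ bi : A i, ∑ a : ∀ j : {j : ι // j ≠ i}, A j.1,
        embedL A i ai π (glue A i bi a) = if bi = ai then 1 else 0 :=
      fun bi => my_embedL_marg A i ai π hsum bi
    simp [this]
  · rw [my_embedL_marg A i ai π hsum bi] at hbi
    by_cases h : bi = ai
    · subst h
      have hc : condDist A (embedL A i bi π) i bi = π := by
        funext a
        unfold condDist
        rw [my_embedL_marg A i bi π hsum bi]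
        simp [embedL, my_glue_self, my_restrict_glue]
      rw [hc]
      exact hπ
    · simp [h] at hbi

/-- Lemma 1(i): for each player `i`, the convex hull of `C(Γ, i)` equals
the set of distributions `μ ∈ Δ(A)` all of whose conditionals given supported actions
of player `i` lie in the convex hull of the corresponding `C(Γ, i, a_i)`. -/
theorem convexHull_CEi_eq
    (hV : ∀ (i : ι) (z : (∀ j : {j : ι // j ≠ i}, A j.1) → ℝ),
      Continuous (fun π => V i π z)) :
    ∀ i : ι, convexHull ℝ (CEi A x V i) =
      {μ : (∀ j, A j) → ℝ | μ ∈ stdSimplex ℝ (∀ j, A j) ∧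
        ∀ ai : A i, 0 < marg A μ i ai →
          condDist A μ i ai ∈ convexHull ℝ (CEia A x V i ai)} := by
  intro i
  apply Set.Subset.antisymm
  · -- hull ⊆ RHS : RHS is convex and contains CEi
    apply convexHull_min
    · rintro μ ⟨h1, h2⟩
      exact ⟨h1, fun ai hai => subset_convexHull ℝ _ (h2 ai hai)⟩
    · rintro μ ⟨hμΔ, hμ⟩ ν ⟨hνΔ, hν⟩ t s ht hs hts
      refine ⟨convex_stdSimplex ℝ _ hμΔ hνΔ ht hs hts, fun ai hai => ?_⟩
      have hm : marg A (t • μ + s • ν) i ai = t * marg A μ i ai + s * marg A ν i ai :=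
        my_marg_smul_add A t s μ ν i ai
      set mμ := marg A μ i ai with hmμ
      set mν := marg A ν i ai with hmν
      have hmμ0 : 0 ≤ mμ := my_marg_nonneg A hμΔ i ai
      have hmν0 : 0 ≤ mν := my_marg_nonneg A hνΔ i ai
      by_cases h1 : mμ = 0
      · -- the combination conditional equals ν's conditional
        have hb : 0 < s * mν := by
          have := hai; rw [hm, h1, mul_zero, zero_add] at this; exact this
        have hs' : s ≠ 0 := by
          rintro rfl; rw [zero_mul] at hb; exact lt_irrefl 0 hb
        have hmν' : 0 < mν := by
          rcases lt_or_eq_of_le hmν0 with h | h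
          · exact h
          · rw [← h, mul_zero] at hb; exact absurd hb (lt_irrefl 0)
        have : condDist A (t • μ + s • ν) i ai = condDist A ν i ai := by
          funext a
          unfold condDist
          rw [hm, h1, mul_zero, zero_add]
          have hz : μ (glue A i ai a) = 0 := my_glue_eq_zero A hμΔ h1 a
          simp only [Pi.add_apply, Pi.smul_apply, smul_eq_mul, hz, mul_zero, zero_add]
          rw [mul_div_mul_left _ _ hs']
        rw [this]
        exact hν ai hmν'
      · by_cases h2 : mν = 0
        · have hb : 0 < t * mμ := by
            have := hai; rw [hm, h2, mul_zero, add_zero] at this; exact this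
          have ht' : t ≠ 0 := by
            rintro rfl; rw [zero_mul] at hb; exact lt_irrefl 0 hb
          have hmμ' : 0 < mμ := lt_of_le_of_ne hmμ0 (Ne.symm h1)
          have : condDist A (t • μ + s • ν) i ai = condDist A μ i ai := by
            funext a
            unfold condDist
            rw [hm, h2, mul_zero, add_zero]
            have hz : ν (glue A i ai a) = 0 := my_glue_eq_zero A hνΔ h2 a
            simp only [Pi.add_apply, Pi.smul_apply, smul_eq_mul, hz, mul_zero, add_zero]
            rw [mul_div_mul_left _ _ ht']
          rw [this]
          exact hμ ai hmμ'
        · -- both marginals positive: genuine convex combination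
          have hmμ' : 0 < mμ := lt_of_le_of_ne hmμ0 (Ne.symm h1)
          have hmν' : 0 < mν := lt_of_le_of_ne hmν0 (Ne.symm h2)
          set m := t * mμ + s * mν with hmdef
          have hm' : 0 < m := by rw [← hm]; exact hai
          have key : condDist A (t • μ + s • ν) i ai
              = (t * mμ / m) • condDist A μ i ai + (s * mν / m) • condDist A ν i ai := by
            funext a
            unfold condDist
            simp only [Pi.add_apply, Pi.smul_apply, smul_eq_mul, hm, ← hmdef]
            field_simp
            simp only [← hmμ, ← hmν, mul_div_cancel_right₀ _ h1, mul_div_cancel_right₀ _ h2]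
          rw [key]
          exact (convex_convexHull ℝ _) (hμ ai hmμ') (hν ai hmν')
            (div_nonneg (mul_nonneg ht hmμ0) hm'.le)
            (div_nonneg (mul_nonneg hs hmν0) hm'.le)
            (by field_simp; exact hmdef.symm)
  · -- RHS ⊆ hull
    rintro μ ⟨hμΔ, hcond⟩
    have key : μ = ∑ ai ∈ Finset.univ.filter (fun ai => 0 < marg A μ i ai),
        marg A μ i ai • embedL A i ai (condDist A μ i ai) := by
      funext b
      rw [Finset.sum_apply]
      have : ∀ ai ∈ Finset.univ.filter (fun ai => 0 < marg A μ i ai),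
          (marg A μ i ai • embedL A i ai (condDist A μ i ai)) b
          = if ai = b i then marg A μ i ai * condDist A μ i ai (fun j => b j.1) else 0 := by
        intro ai _
        simp only [Pi.smul_apply, smul_eq_mul, embedL, LinearMap.coe_mk, AddHom.coe_mk]
        by_cases h : b i = ai
        · simp [h, eq_comm]
        · have h' : ¬ ai = b i := fun hh => h hh.symm
          simp [h, h']
      rw [Finset.sum_congr rfl this, Finset.sum_ite_eq']
      by_cases h : 0 < marg A μ i (b i)
      · simp only [Finset.mem_filter, Finset.mem_univ, true_and, h, if_true]
        unfold condDist
        rw [my_glue_restrict A i b, mul_div_cancel₀ _ (ne_of_gt h)]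
      · simp only [Finset.mem_filter, Finset.mem_univ, true_and, h, if_false]
        have hz : marg A μ i (b i) = 0 :=
          le_antisymm (not_lt.1 h) (my_marg_nonneg A hμΔ i (b i))
        have := my_glue_eq_zero A hμΔ hz (fun j => b j.1)
        rw [my_glue_restrict A i b] at this
        exact this
    rw [key]
    apply (convex_convexHull ℝ (CEi A x V i)).sum_mem
    · intro ai _; exact my_marg_nonneg A hμΔ i ai
    · rw [Finset.sum_filter_of_ne (fun ai _ h => ?_), my_sum_marg A hμΔ i]
      exact lt_of_le_of_ne (my_marg_nonneg A hμΔ i ai) (Ne.symm h)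
    · intro ai hai
      rw [Finset.mem_filter] at hai
      have h1 : embedL A i ai (condDist A μ i ai)
          ∈ convexHull ℝ ((embedL A i ai) '' CEia A x V i ai) := by
        rw [← LinearMap.image_convexHull]
        exact Set.mem_image_of_mem _ (hcond ai hai.2)
      refine convexHull_mono ?_ h1
      rintro _ ⟨π, hπ, rfl⟩
      exact my_embedL_mem_CEi A x V i ai hπ

end
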